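/- Let $s\in(0,1)$, $p\in[1,\infty)$ with $sp<N$, and set $p^* = Np/(N-sp)$. Then there exists a constant $C=C(N,s,p)>0$ such that for every $u\in W^{s,p}(\mathbb{R}^N)$, $\|u\|_{L^{p^*}}^p \le C \int_{\mathbb{R}^N}\int_{\mathbb{R}^N} \frac{|u(x)-u(y)|^p}{|x-y|^{N+sp}}\,dx\,dy$. -/

import Mathlib

open MeasureTheory Filter Topology

section FracSobAux

open Metric
open scoped ENNReal NNReal

namespace FracSob

private lemma rpow_ne_zero' {x : ℝ≥0∞} (h0 : x ≠ 0) (ht : x ≠ ⊤) (y : ℝ) : x ^ y ≠ 0 := by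
  simp [ENNReal.rpow_eq_zero_iff, h0, ht]

private lemma rpow_ne_top' {x : ℝ≥0∞} (h0 : x ≠ 0) (ht : x ≠ ⊤) (y : ℝ) : x ^ y ≠ ⊤ := by
  simp [ENNReal.rpow_eq_top_iff, h0, ht]

private lemma add_rpow_le {a b : ℝ≥0∞} {p : ℝ} (hp : 0 ≤ p) :
    (a + b) ^ p ≤ 2 ^ p * (a ^ p + b ^ p) := by
  have h1 : a + b ≤ 2 * (a ⊔ b) := by
    rw [two_mul]; exact add_le_add le_sup_left le_sup_right
  calc (a + b) ^ p ≤ (2 * (a ⊔ b)) ^ p := ENNReal.rpow_le_rpow h1 hp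
    _ = 2 ^ p * (a ⊔ b) ^ p := ENNReal.mul_rpow_of_nonneg _ _ hp
    _ ≤ 2 ^ p * (a ^ p + b ^ p) := by
        gcongr
        rcases le_total a b with h | h
        · rw [sup_eq_right.2 h]; exact le_add_self
        · rw [sup_eq_left.2 h]; exact le_self_add

private lemma opt_lemma {B G A' : ℝ≥0∞} {a t : ℝ} (ha : 0 < a) (ht : 0 < t)
    (hA0 : A' ≠ 0) (hAt : A' ≠ ⊤)
    (h : ∀ R : ℝ≥0∞, R ≠ 0 → R ≠ ⊤ → B ≤ R ^ a * G + R ^ (-t) * A') :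
    B ≤ 2 * (G ^ (t / (a + t)) * A' ^ (a / (a + t))) := by
  have hat : (0:ℝ) < a + t := by linarith
  rcases eq_or_ne G 0 with hG | hG
  · have hB : B ≤ 0 := by
      refine ENNReal.le_of_forall_pos_le_add fun ε hε _ => ?_
      set R : ℝ≥0∞ := (A' / ε) ^ t⁻¹ + 1 with hR
      have hdiv : A' / (ε : ℝ≥0∞) ≠ ⊤ :=
        (ENNReal.div_lt_top hAt (by exact_mod_cast hε.ne')).ne
      have hR0 : R ≠ 0 := by simp [hR]
      have hRT : R ≠ ⊤ := by
        simp only [hR, Ne, ENNReal.add_eq_top, ENNReal.one_ne_top, or_false]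
        exact (ENNReal.rpow_lt_top_of_nonneg (by positivity) hdiv).ne
      have hb := h R hR0 hRT
      rw [hG, mul_zero, zero_add] at hb
      have h2 : R ^ (-t) ≤ (A' / ε)⁻¹ := by
        rw [ENNReal.rpow_neg]
        have : A' / ε ≤ R ^ t := by
          calc A' / ε = ((A' / ε) ^ t⁻¹) ^ t := by
                rw [← ENNReal.rpow_mul, inv_mul_cancel₀ ht.ne', ENNReal.rpow_one]
            _ ≤ R ^ t := ENNReal.rpow_le_rpow le_self_add ht.le
        exact ENNReal.inv_le_inv.2 this
      calc B ≤ R ^ (-t) * A' := hb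
        _ ≤ (A' / ε)⁻¹ * A' := mul_le_mul_left h2 A'
        _ = (ε : ℝ≥0∞) / A' * A' := by
            rw [ENNReal.inv_div (Or.inl (by simp)) (Or.inl (by exact_mod_cast hε.ne'))]
        _ = (ε : ℝ≥0∞) := ENNReal.div_mul_cancel hA0 hAt
        _ = 0 + ε := (zero_add _).symm
    exact le_trans hB zero_le
  rcases eq_or_ne G ⊤ with hGT | hGT
  · rw [hGT, ENNReal.top_rpow_of_pos (by positivity),
      ENNReal.top_mul (rpow_ne_zero' hA0 hAt _), ENNReal.mul_top (by norm_num)]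
    exact le_top
  · set R : ℝ≥0∞ := A' ^ (a+t)⁻¹ * G ^ (-(a+t)⁻¹) with hRdef
    have hA'f : A' ^ (a+t)⁻¹ ≠ ⊤ := rpow_ne_top' hA0 hAt _
    have hGf : G ^ (-(a+t)⁻¹) ≠ ⊤ := rpow_ne_top' hG hGT _
    have hR0 : R ≠ 0 := mul_ne_zero (rpow_ne_zero' hA0 hAt _) (rpow_ne_zero' hG hGT _)
    have hRT : R ≠ ⊤ := ENNReal.mul_ne_top hA'f hGf
    have key : ∀ z : ℝ, R ^ z = A' ^ ((a+t)⁻¹ * z) * G ^ (-(a+t)⁻¹ * z) := fun z => by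
      rw [hRdef, ENNReal.mul_rpow_of_ne_top hA'f hGf, ← ENNReal.rpow_mul, ← ENNReal.rpow_mul]
    have ea : (a+t)⁻¹ * a = a / (a+t) := by field_simp
    have eb : -(a+t)⁻¹ * a + 1 = t / (a+t) := by field_simp; try ring
    have ec : (a+t)⁻¹ * -t + 1 = a / (a+t) := by field_simp; try ring
    have ed : -(a+t)⁻¹ * -t = t / (a+t) := by field_simp; try ring
    have e1 : R ^ a * G = G ^ (t / (a + t)) * A' ^ (a / (a + t)) := by
      calc R ^ a * G = A' ^ ((a+t)⁻¹ * a) * G ^ (-(a+t)⁻¹ * a) * G ^ (1:ℝ) := by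
            rw [key, ENNReal.rpow_one]
        _ = A' ^ ((a+t)⁻¹ * a) * (G ^ (-(a+t)⁻¹ * a) * G ^ (1:ℝ)) := by ring
        _ = A' ^ ((a+t)⁻¹ * a) * G ^ (-(a+t)⁻¹ * a + 1) := by
            rw [← ENNReal.rpow_add _ _ hG hGT]
        _ = G ^ (t / (a + t)) * A' ^ (a / (a + t)) := by rw [ea, eb]; ring
    have e2 : R ^ (-t) * A' = G ^ (t / (a + t)) * A' ^ (a / (a + t)) := by
      calc R ^ (-t) * A' = A' ^ ((a+t)⁻¹ * -t) * G ^ (-(a+t)⁻¹ * -t) * A' ^ (1:ℝ) := by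
            rw [key, ENNReal.rpow_one]
        _ = A' ^ ((a+t)⁻¹ * -t) * A' ^ (1:ℝ) * G ^ (-(a+t)⁻¹ * -t) := by ring
        _ = A' ^ ((a+t)⁻¹ * -t + 1) * G ^ (-(a+t)⁻¹ * -t) := by
            rw [← ENNReal.rpow_add _ _ hA0 hAt]
        _ = G ^ (t / (a + t)) * A' ^ (a / (a + t)) := by rw [ec, ed]; ring
    calc B ≤ R ^ a * G + R ^ (-t) * A' := h R hR0 hRT
      _ = 2 * (G ^ (t / (a + t)) * A' ^ (a / (a + t))) := by rw [e1, e2, two_mul]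

private lemma abs_clamp (a k : ℝ) (hk : 0 ≤ k) : |max (-k) (min a k)| = min |a| k := by
  rcases le_total k a with h1 | h1
  · rw [min_eq_right h1, max_eq_right (neg_le_self hk), abs_of_nonneg hk, min_eq_right]
    rw [abs_of_nonneg (hk.trans h1)]; exact h1
  rcases le_total a (-k) with h2 | h2
  · rw [min_eq_left (h2.trans (neg_le_self hk)), max_eq_left h2,
      abs_of_nonpos (neg_nonpos.2 hk), neg_neg, min_eq_right]
    rw [abs_of_nonpos (h2.trans (neg_nonpos.2 hk))]; linarith
  · rw [min_eq_left h1, max_eq_right h2, min_eq_left (abs_le.2 ⟨h2, h1⟩)]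


private lemma core {N : ℕ} {s p : ℝ} (hs0 : 0 < s) (hp : 1 ≤ p) (hsp : s * p < N) :
    ∃ D : ℝ≥0∞, D ≠ 0 ∧ D ≠ ⊤ ∧
      ∀ u : EuclideanSpace ℝ (Fin N) → ℝ, Measurable u →
        (∫⁻ x, ‖u x‖₊ ^ (N * p / (N - s * p))) ≠ ⊤ →
        (∫⁻ x, ‖u x‖₊ ^ (N * p / (N - s * p))) ^ ((N - s * p) / N) ≤
          D * ∫⁻ x, ∫⁻ y, ‖u x - u y‖₊ ^ p / ENNReal.ofReal (‖x - y‖ ^ (N + s * p)) := by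
  have hp0 : (0:ℝ) < p := lt_of_lt_of_le one_pos hp
  have hsp0 : (0:ℝ) < s * p := mul_pos hs0 hp0
  have hNr : (0:ℝ) < N := lt_trans hsp0 hsp
  have hNs : (0:ℝ) < N - s * p := by linarith
  have hN : 0 < N := by exact_mod_cast hNr
  haveI : Nontrivial (EuclideanSpace ℝ (Fin N)) :=
    Module.nontrivial_of_finrank_pos (R := ℝ) (by rw [finrank_euclideanSpace_fin]; exact hN)
  set c : ℝ≥0∞ := volume (ball (0 : EuclideanSpace ℝ (Fin N)) 1) with hc
  have hc0 : c ≠ 0 := (measure_ball_pos volume 0 one_pos).ne'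
  have hcT : c ≠ ⊤ := measure_ball_lt_top.ne
  have h2T : ((2:ℝ≥0∞)) ≠ ⊤ := by norm_num
  have h20 : ((2:ℝ≥0∞)) ≠ 0 := by norm_num
  have h2pT : ((2:ℝ≥0∞)) ^ p ≠ ⊤ := rpow_ne_top' h20 h2T p
  have h2p0 : ((2:ℝ≥0∞)) ^ p ≠ 0 := rpow_ne_zero' h20 h2T p
  -- the constant
  set e : ℝ := s * p / (N - s * p) with he
  set D : ℝ≥0∞ := 2 ^ ((N:ℝ) / (N - s * p)) * 2 ^ p * c⁻¹ *
      (2 ^ p * c ^ (s * p / N - 1)) ^ e with hD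
  have hcinv0 : c⁻¹ ≠ 0 := ENNReal.inv_ne_zero.2 hcT
  have hcinvT : c⁻¹ ≠ ⊤ := ENNReal.inv_ne_top.2 hc0
  have hbr0 : (2:ℝ≥0∞) ^ p * c ^ (s * p / N - 1) ≠ 0 :=
    mul_ne_zero h2p0 (rpow_ne_zero' hc0 hcT _)
  have hbrT : (2:ℝ≥0∞) ^ p * c ^ (s * p / N - 1) ≠ ⊤ :=
    ENNReal.mul_ne_top h2pT (rpow_ne_top' hc0 hcT _)
  have hD0 : D ≠ 0 := by
    refine mul_ne_zero (mul_ne_zero (mul_ne_zero ?_ h2p0) hcinv0) (rpow_ne_zero' hbr0 hbrT _)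
    exact rpow_ne_zero' h20 h2T _
  have hDT : D ≠ ⊤ := by
    refine ENNReal.mul_ne_top (ENNReal.mul_ne_top (ENNReal.mul_ne_top ?_ h2pT) hcinvT)
      (rpow_ne_top' hbr0 hbrT _)
    exact rpow_ne_top' h20 h2T _
  refine ⟨D, hD0, hDT, ?_⟩
  intro u hu hLT
  set F : EuclideanSpace ℝ (Fin N) → ℝ≥0∞ := fun x =>
    ∫⁻ y, ‖u x - u y‖₊ ^ p / ENNReal.ofReal (‖x - y‖ ^ (N + s * p)) with hF
  set Λ : ℝ≥0∞ := ∫⁻ x, (‖u x‖₊ : ℝ≥0∞) ^ ((N:ℝ) * p / (N - s * p)) with hLam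
  rcases eq_or_ne Λ 0 with hL0 | hL0
  · rw [hL0, ENNReal.zero_rpow_of_pos (by positivity)]
    exact zero_le
  -- pointwise per-radius bound
  have hstep : ∀ x : EuclideanSpace ℝ (Fin N), ∀ R : ℝ≥0∞, R ≠ 0 → R ≠ ⊤ →
      (‖u x‖₊ : ℝ≥0∞) ^ p ≤ R ^ (s * p) * (2 ^ p * c⁻¹ * F x) +
        R ^ (-(N - s * p)) * ((2 ^ p * c ^ (s * p / N - 1)) * Λ ^ ((N - s * p) / N)) := by
    intro x R hR0 hRT
    set r : ℝ := R.toReal with hr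
    have hrpos : 0 < r := ENNReal.toReal_pos hR0 hRT
    have hRr : ENNReal.ofReal r = R := ENNReal.ofReal_toReal hRT
    have hball : volume (ball x r) = R ^ (N:ℝ) * c := by
      rw [Measure.addHaar_ball volume x hrpos.le, finrank_euclideanSpace_fin,
        ← Real.rpow_natCast r N, ← ENNReal.ofReal_rpow_of_pos hrpos, hRr, hc]
    -- triangle inequality pointwise
    have tri : ∀ y, (‖u x‖₊ : ℝ≥0∞) ^ p ≤
        2 ^ p * ((‖u x - u y‖₊ : ℝ≥0∞) ^ p + (‖u y‖₊ : ℝ≥0∞) ^ p) := by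
      intro y
      refine le_trans (ENNReal.rpow_le_rpow ?_ hp0.le) (add_rpow_le hp0.le)
      have h1 : ‖u x‖₊ ≤ ‖u x - u y‖₊ + ‖u y‖₊ := by
        simpa using nnnorm_add_le (u x - u y) (u y)
      exact_mod_cast h1
    have meas1 : Measurable fun y => (‖u x - u y‖₊ : ℝ≥0∞) ^ p :=
      ((measurable_const.sub hu).nnnorm.coe_nnreal_ennreal).pow_const p
    have meas2 : Measurable fun y : EuclideanSpace ℝ (Fin N) => (‖u y‖₊ : ℝ≥0∞) ^ p :=
      (hu.nnnorm.coe_nnreal_ennreal).pow_const p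
    -- first piece
    have eI1 : (∫⁻ y in ball x r, (‖u x - u y‖₊ : ℝ≥0∞) ^ p) ≤ R ^ ((N:ℝ) + s * p) * F x := by
      have hNsp : (0:ℝ) ≤ (N:ℝ) + s * p := by positivity
      calc ∫⁻ y in ball x r, (‖u x - u y‖₊ : ℝ≥0∞) ^ p
          ≤ ∫⁻ y in ball x r, ENNReal.ofReal (r ^ ((N:ℝ) + s * p)) *
              ((‖u x - u y‖₊ : ℝ≥0∞) ^ p / ENNReal.ofReal (‖x - y‖ ^ ((N:ℝ) + s * p))) := by
            refine setLIntegral_mono ?_ ?_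
            · exact (measurable_const.mul (meas1.div
                (((measurable_const.sub measurable_id).norm.pow_const _).ennreal_ofReal)))
            · intro y hy
              rcases eq_or_ne y x with rfl | hyx
              · have : (‖u y - u y‖₊ : ℝ≥0∞) ^ p = 0 := by
                  simp [ENNReal.rpow_eq_zero_iff, hp0]
                rw [this]
                exact zero_le
              · have hxy : 0 < ‖x - y‖ := by
                  rw [norm_pos_iff, sub_ne_zero]; exact hyx.symm
                have hK0 : ENNReal.ofReal (‖x - y‖ ^ ((N:ℝ) + s * p)) ≠ 0 := by
                  simp only [ne_eq, ENNReal.ofReal_eq_zero, not_le]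
                  exact Real.rpow_pos_of_pos hxy _
                nth_rewrite 1 [← ENNReal.div_mul_cancel hK0 ENNReal.ofReal_ne_top
                  (b := (‖u x - u y‖₊ : ℝ≥0∞) ^ p)]
                rw [mul_comm]
                refine mul_le_mul_left (ENNReal.ofReal_le_ofReal ?_) _
                refine Real.rpow_le_rpow (norm_nonneg _) ?_ hNsp
                have : dist y x < r := mem_ball.1 hy
                calc ‖x - y‖ = dist x y := by rw [dist_eq_norm]
                  _ = dist y x := dist_comm _ _
                  _ ≤ r := this.le
        _ = ENNReal.ofReal (r ^ ((N:ℝ) + s * p)) *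
              ∫⁻ y in ball x r, (‖u x - u y‖₊ : ℝ≥0∞) ^ p /
                ENNReal.ofReal (‖x - y‖ ^ ((N:ℝ) + s * p)) :=
            lintegral_const_mul' _ _ ENNReal.ofReal_ne_top
        _ ≤ ENNReal.ofReal (r ^ ((N:ℝ) + s * p)) * F x :=
            mul_le_mul_right (lintegral_mono' Measure.restrict_le_self le_rfl) _
        _ = R ^ ((N:ℝ) + s * p) * F x := by
            rw [← ENNReal.ofReal_rpow_of_pos hrpos, hRr]
    -- second piece (Hölder)
    have eI2 : (∫⁻ y in ball x r, (‖u y‖₊ : ℝ≥0∞) ^ p) ≤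
        Λ ^ ((N - s * p) / N) * (volume (ball x r)) ^ (s * p / N) := by
      have hconj : Real.HolderConjugate ((N:ℝ) / (N - s * p)) ((N:ℝ) / (s * p)) := by
        rw [Real.holderConjugate_iff]
        constructor
        · rw [lt_div_iff₀ hNs]; linarith
        · rw [← one_div, ← one_div, one_div_div, one_div_div]
          field_simp
          ring
      have hH := ENNReal.lintegral_mul_le_Lp_mul_Lq (volume.restrict (ball x r)) hconj
        (f := fun y => (‖u y‖₊ : ℝ≥0∞) ^ p) (g := fun _ => 1)
        meas2.aemeasurable aemeasurable_const
      simp only [Pi.mul_apply, mul_one, ENNReal.one_rpow] at hH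
      have hfq : ∀ y : EuclideanSpace ℝ (Fin N),
          ((‖u y‖₊ : ℝ≥0∞) ^ p) ^ ((N:ℝ) / (N - s * p)) =
            (‖u y‖₊ : ℝ≥0∞) ^ ((N:ℝ) * p / (N - s * p)) := by
        intro y
        rw [← ENNReal.rpow_mul]
        congr 1
        field_simp
      calc ∫⁻ y in ball x r, (‖u y‖₊ : ℝ≥0∞) ^ p
          ≤ (∫⁻ y in ball x r, ((‖u y‖₊ : ℝ≥0∞) ^ p) ^ ((N:ℝ) / (N - s * p))) ^
              (1 / ((N:ℝ) / (N - s * p))) *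
            (∫⁻ _ in ball x r, (1:ℝ≥0∞)) ^ (1 / ((N:ℝ) / (s * p))) := hH
        _ ≤ Λ ^ ((N - s * p) / N) * (volume (ball x r)) ^ (s * p / N) := by
            rw [one_div_div, one_div_div, setLIntegral_one]
            gcongr
            · simp only [hfq]
              exact lintegral_mono' Measure.restrict_le_self le_rfl
    -- combine on the ball
    have hmain : volume (ball x r) * (‖u x‖₊ : ℝ≥0∞) ^ p ≤
        2 ^ p * (R ^ ((N:ℝ) + s * p) * F x) +
        2 ^ p * (Λ ^ ((N - s * p) / N) * (volume (ball x r)) ^ (s * p / N)) := by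
      calc volume (ball x r) * (‖u x‖₊ : ℝ≥0∞) ^ p
          = ∫⁻ _ in ball x r, (‖u x‖₊ : ℝ≥0∞) ^ p := by rw [setLIntegral_const, mul_comm]
        _ ≤ ∫⁻ y in ball x r, 2 ^ p * ((‖u x - u y‖₊ : ℝ≥0∞) ^ p + (‖u y‖₊ : ℝ≥0∞) ^ p) :=
            lintegral_mono tri
        _ = 2 ^ p * ((∫⁻ y in ball x r, (‖u x - u y‖₊ : ℝ≥0∞) ^ p) +
              ∫⁻ y in ball x r, (‖u y‖₊ : ℝ≥0∞) ^ p) := by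
            rw [lintegral_const_mul' _ _ h2pT, lintegral_add_left meas1]
        _ ≤ 2 ^ p * ((R ^ ((N:ℝ) + s * p) * F x) +
              Λ ^ ((N - s * p) / N) * (volume (ball x r)) ^ (s * p / N)) := by
            gcongr
        _ = _ := by ring
    -- divide by the volume of the ball
    have hRN0 : R ^ ((N:ℝ)) ≠ 0 := rpow_ne_zero' hR0 hRT _
    have hRNT : R ^ ((N:ℝ)) ≠ ⊤ := rpow_ne_top' hR0 hRT _
    have hv0 : R ^ ((N:ℝ)) * c ≠ 0 := mul_ne_zero hRN0 hc0
    have hvT : R ^ ((N:ℝ)) * c ≠ ⊤ := ENNReal.mul_ne_top hRNT hcT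
    have hRR1 : (R ^ ((N:ℝ)))⁻¹ * R ^ ((N:ℝ) + s * p) = R ^ (s * p) := by
      rw [← ENNReal.rpow_neg, ← ENNReal.rpow_add _ _ hR0 hRT]
      congr 1; ring
    have h2a : (R ^ ((N:ℝ)) * c) ^ (s * p / N) = R ^ (s * p) * c ^ (s * p / N) := by
      rw [ENNReal.mul_rpow_of_ne_top hRNT hcT, ← ENNReal.rpow_mul]
      congr 2
      field_simp
    have h2b : (R ^ ((N:ℝ)))⁻¹ * R ^ (s * p) = R ^ (-(N - s * p)) := by
      rw [← ENNReal.rpow_neg, ← ENNReal.rpow_add _ _ hR0 hRT]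
      congr 1; ring
    have h2c : c⁻¹ * c ^ (s * p / N) = c ^ (s * p / N - 1) := by
      rw [← ENNReal.rpow_neg_one c, ← ENNReal.rpow_add _ _ hc0 hcT]
      congr 1; ring
    have hvinv : (R ^ ((N:ℝ)) * c)⁻¹ = (R ^ ((N:ℝ)))⁻¹ * c⁻¹ :=
      ENNReal.mul_inv (Or.inl hRN0) (Or.inl hRNT)
    calc (‖u x‖₊ : ℝ≥0∞) ^ p
        = (R ^ ((N:ℝ)) * c)⁻¹ * ((R ^ ((N:ℝ)) * c) * (‖u x‖₊ : ℝ≥0∞) ^ p) := by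
          rw [← mul_assoc, ENNReal.inv_mul_cancel hv0 hvT, one_mul]
      _ ≤ (R ^ ((N:ℝ)) * c)⁻¹ * (2 ^ p * (R ^ ((N:ℝ) + s * p) * F x) +
            2 ^ p * (Λ ^ ((N - s * p) / N) * (volume (ball x r)) ^ (s * p / N))) := by
          refine mul_le_mul_right ?_ _
          rw [← hball]
          exact hmain
      _ = R ^ (s * p) * (2 ^ p * c⁻¹ * F x) +
            R ^ (-(N - s * p)) * ((2 ^ p * c ^ (s * p / N - 1)) * Λ ^ ((N - s * p) / N)) := by
          rw [hball, h2a, hvinv, mul_add]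
          rw [show ((R ^ ((N:ℝ)))⁻¹ * c⁻¹) * (2 ^ p * (R ^ ((N:ℝ) + s * p) * F x)) =
            ((R ^ ((N:ℝ)))⁻¹ * R ^ ((N:ℝ) + s * p)) * (2 ^ p * c⁻¹ * F x) by ring, hRR1]
          rw [show ((R ^ ((N:ℝ)))⁻¹ * c⁻¹) *
              (2 ^ p * (Λ ^ ((N - s * p) / N) * (R ^ (s * p) * c ^ (s * p / N)))) =
            ((R ^ ((N:ℝ)))⁻¹ * R ^ (s * p)) * ((c⁻¹ * c ^ (s * p / N)) *
              (2 ^ p * Λ ^ ((N - s * p) / N))) by ring, h2b, h2c]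
          ring
  -- apply the optimization lemma and integrate
  have hLamθT : Λ ^ ((N - s * p) / N) ≠ ⊤ := rpow_ne_top' hL0 hLT _
  have hLamθ0 : Λ ^ ((N - s * p) / N) ≠ 0 := rpow_ne_zero' hL0 hLT _
  have key : ∀ x, (‖u x‖₊ : ℝ≥0∞) ^ ((N:ℝ) * p / (N - s * p)) ≤
      (D * Λ ^ (s * p / N)) * F x := by
    intro x
    have hA'0 : (2:ℝ≥0∞) ^ p * c ^ (s * p / N - 1) * Λ ^ ((N - s * p) / N) ≠ 0 :=
      mul_ne_zero hbr0 hLamθ0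
    have hA'T : (2:ℝ≥0∞) ^ p * c ^ (s * p / N - 1) * Λ ^ ((N - s * p) / N) ≠ ⊤ :=
      ENNReal.mul_ne_top hbrT hLamθT
    have hopt := opt_lemma (B := (‖u x‖₊ : ℝ≥0∞) ^ p) (G := 2 ^ p * c⁻¹ * F x)
      (a := s * p) (t := (N:ℝ) - s * p) hsp0 hNs hA'0 hA'T (hstep x)
    rw [show s * p + ((N:ℝ) - s * p) = (N:ℝ) by ring] at hopt
    -- raise to the power N/(N-s*p)
    have hgam : (0:ℝ) < (N:ℝ) / (N - s * p) := by positivity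
    have hlift := ENNReal.rpow_le_rpow hopt hgam.le
    rw [← ENNReal.rpow_mul (‖u x‖₊ : ℝ≥0∞),
      show p * ((N:ℝ) / (N - s * p)) = (N:ℝ) * p / (N - s * p) by ring] at hlift
    refine hlift.trans (le_of_eq ?_)
    rw [ENNReal.mul_rpow_of_nonneg _ _ hgam.le, ENNReal.mul_rpow_of_nonneg _ _ hgam.le,
      ← ENNReal.rpow_mul, show ((N:ℝ) - s * p) / N * ((N:ℝ) / (N - s * p)) = 1 by
        field_simp, ENNReal.rpow_one,
      ← ENNReal.rpow_mul, show (s * p / (N:ℝ)) * ((N:ℝ) / (N - s * p)) = e by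
        rw [he]; field_simp; try ring,
      ENNReal.mul_rpow_of_ne_top hbrT hLamθT,
      ← ENNReal.rpow_mul Λ, show ((N:ℝ) - s * p) / N * e = s * p / N by
        rw [he]; field_simp; try ring, hD]
    ring
  have hint : Λ ≤ (D * Λ ^ (s * p / N)) *
      ∫⁻ x, ∫⁻ y, ‖u x - u y‖₊ ^ p / ENNReal.ofReal (‖x - y‖ ^ (N + s * p)) := by
    calc Λ ≤ ∫⁻ x, (D * Λ ^ (s * p / N)) * F x := lintegral_mono key
      _ = _ := lintegral_const_mul' _ _ (ENNReal.mul_ne_top hDT (rpow_ne_top' hL0 hLT _))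
  calc Λ ^ ((N - s * p) / N)
      = Λ ^ (1:ℝ) * Λ ^ (-(s * p / N)) := by
        rw [← ENNReal.rpow_add _ _ hL0 hLT]
        congr 1
        field_simp
        ring
    _ ≤ ((D * Λ ^ (s * p / N)) *
          (∫⁻ x, ∫⁻ y, ‖u x - u y‖₊ ^ p / ENNReal.ofReal (‖x - y‖ ^ (N + s * p)))) *
          Λ ^ (-(s * p / N)) := by
        rw [ENNReal.rpow_one]
        exact mul_le_mul_left hint _
    _ = (D * (∫⁻ x, ∫⁻ y, ‖u x - u y‖₊ ^ p / ENNReal.ofReal (‖x - y‖ ^ (N + s * p)))) *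
          (Λ ^ (s * p / N) * Λ ^ (-(s * p / N))) := by ring
    _ = D * ∫⁻ x, ∫⁻ y, ‖u x - u y‖₊ ^ p / ENNReal.ofReal (‖x - y‖ ^ (N + s * p)) := by
        rw [← ENNReal.rpow_add _ _ hL0 hLT, add_neg_cancel, ENNReal.rpow_zero, mul_one]

end FracSob

end FracSobAux

section FracSobMain

open Metric
open scoped ENNReal NNReal

/-- **Fractional Sobolev embedding theorem.** For `s ∈ (0,1)`, `p ∈ [1,∞)` with
`sp < N`, there is a constant `C = C(N,s,p) > 0` such that
`‖u‖_{L^{p*}}^p ≤ C ∬ |u(x)-u(y)|^p / |x-y|^{N+sp}` for all `u ∈ W^{s,p}(ℝ^N)`,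
where `p* = Np/(N-sp)`. -/
theorem fractional_sobolev_embedding
    {N : ℕ} {s p : ℝ} (hs0 : 0 < s) (hs1 : s < 1) (hp : 1 ≤ p)
    (hsp : s * p < N) :
    ∃ C : ℝ, 0 < C ∧
      ∀ u : EuclideanSpace ℝ (Fin N) → ℝ, Measurable u →
        MemLp u (ENNReal.ofReal p) (volume : Measure (EuclideanSpace ℝ (Fin N))) →
        (∫⁻ x, ‖u x‖₊ ^ (N * p / (N - s * p))) ^ ((N - s * p) / N) ≤
          ENNReal.ofReal C *
            ∫⁻ x, ∫⁻ y, ‖u x - u y‖₊ ^ p / ENNReal.ofReal (‖x - y‖ ^ (N + s * p)) := by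
  obtain ⟨D, hD0, hDT, hco⟩ := FracSob.core hs0 hp hsp
  have hp0 : (0:ℝ) < p := lt_of_lt_of_le one_pos hp
  have hsp0 : (0:ℝ) < s * p := mul_pos hs0 hp0
  have hNr : (0:ℝ) < N := lt_trans hsp0 hsp
  have hNs : (0:ℝ) < N - s * p := by linarith
  refine ⟨D.toReal, ENNReal.toReal_pos hD0 hDT, ?_⟩
  intro u hu hmem
  rw [ENNReal.ofReal_toReal hDT]
  set θ : ℝ := ((N:ℝ) - s * p) / N with hθdef
  have hθ : 0 < θ := by positivity
  set q : ℝ := (N:ℝ) * p / ((N:ℝ) - s * p) with hqdef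
  have hq0 : 0 < q := by positivity
  have hpq : p < q := by
    rw [hqdef, lt_div_iff₀ hNs]
    nlinarith
  set J : ℝ≥0∞ :=
    ∫⁻ x, ∫⁻ y, ‖u x - u y‖₊ ^ p / ENNReal.ofReal (‖x - y‖ ^ (N + s * p)) with hJ
  -- truncations
  set v : ℕ → EuclideanSpace ℝ (Fin N) → ℝ := fun k x => max (-(k:ℝ)) (min (u x) k) with hv
  have hvm : ∀ k, Measurable (v k) := fun k => measurable_const.max (hu.min measurable_const)
  have habs : ∀ (k : ℕ) x, ‖v k x‖₊ = min ‖u x‖₊ (k : ℝ≥0) := by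
    intro k x
    apply NNReal.coe_injective
    rw [NNReal.coe_min, coe_nnnorm, coe_nnnorm, Real.norm_eq_abs, Real.norm_eq_abs, hv]
    exact_mod_cast FracSob.abs_clamp (u x) k (Nat.cast_nonneg k)
  have hlip : ∀ (k : ℕ) x y, ‖v k x - v k y‖₊ ≤ ‖u x - u y‖₊ := by
    intro k x y
    rw [← NNReal.coe_le_coe, coe_nnnorm, coe_nnnorm, Real.norm_eq_abs, Real.norm_eq_abs, hv]
    calc |max (-(k:ℝ)) (min (u x) k) - max (-(k:ℝ)) (min (u y) k)|
        = |max (min (u x) k) (-(k:ℝ)) - max (min (u y) k) (-(k:ℝ))| := by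
          rw [max_comm (-(k:ℝ)) (min (u x) k), max_comm (-(k:ℝ)) (min (u y) k)]
      _ ≤ |min (u x) (k:ℝ) - min (u y) (k:ℝ)| := abs_max_sub_max_le_abs _ _ _
      _ ≤ |u x - u y| := by
          simpa using abs_min_sub_min_le_max (u x) (k:ℝ) (u y) (k:ℝ)
  -- finiteness of the p-integral
  have hup : (∫⁻ x, (‖u x‖₊ : ℝ≥0∞) ^ p) ≠ ⊤ := by
    have h1 := hmem.2
    rw [eLpNorm_eq_lintegral_rpow_enorm_toReal (by simp [ENNReal.ofReal_eq_zero]; linarith)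
      ENNReal.ofReal_ne_top, ENNReal.toReal_ofReal hp0.le] at h1
    simp only [enorm_eq_nnnorm] at h1
    intro hT
    rw [hT, ENNReal.top_rpow_of_pos (by positivity)] at h1
    exact (lt_irrefl _ h1).elim
  -- finiteness for truncations
  have hfin : ∀ k : ℕ, (∫⁻ x, (‖v k x‖₊ : ℝ≥0∞) ^ q) ≠ ⊤ := by
    intro k
    have hb : ∀ x, (‖v k x‖₊ : ℝ≥0∞) ^ q ≤ (k : ℝ≥0∞) ^ (q - p) * (‖u x‖₊ : ℝ≥0∞) ^ p := by
      intro x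
      rcases eq_or_ne ((‖v k x‖₊ : ℝ≥0∞)) 0 with h0 | h0
      · rw [h0, ENNReal.zero_rpow_of_pos hq0]
        exact zero_le
      · conv_lhs => rw [show q = (q - p) + p by ring, ENNReal.rpow_add _ _ h0 ENNReal.coe_ne_top]
        have hbk : (‖v k x‖₊ : ℝ≥0∞) ≤ (k : ℝ≥0∞) := by
          rw [habs k x]
          exact_mod_cast (min_le_right ‖u x‖₊ (k:ℝ≥0)).trans le_rfl
        have hbu : (‖v k x‖₊ : ℝ≥0∞) ≤ (‖u x‖₊ : ℝ≥0∞) := by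
          rw [habs k x]
          exact_mod_cast min_le_left ‖u x‖₊ (k:ℝ≥0)
        exact mul_le_mul' (ENNReal.rpow_le_rpow hbk (by linarith))
          (ENNReal.rpow_le_rpow hbu hp0.le)
    have hkT : ((k : ℝ≥0∞)) ^ (q - p) ≠ ⊤ :=
      ENNReal.rpow_ne_top_of_nonneg (by linarith) (ENNReal.natCast_ne_top k)
    intro hT
    have : (∫⁻ x, (‖v k x‖₊ : ℝ≥0∞) ^ q) ≤ (k : ℝ≥0∞) ^ (q - p) * ∫⁻ x, (‖u x‖₊ : ℝ≥0∞) ^ p := by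
      calc (∫⁻ x, (‖v k x‖₊ : ℝ≥0∞) ^ q)
          ≤ ∫⁻ x, (k : ℝ≥0∞) ^ (q - p) * (‖u x‖₊ : ℝ≥0∞) ^ p := lintegral_mono hb
        _ = _ := lintegral_const_mul' _ _ hkT
    rw [hT] at this
    exact (ENNReal.mul_ne_top hkT hup) (top_le_iff.1 this)
  -- per-truncation bound
  have hk1 : ∀ k : ℕ, (∫⁻ x, (‖v k x‖₊ : ℝ≥0∞) ^ q) ^ θ ≤ D * J := by
    intro k
    refine (hco (v k) (hvm k) (hfin k)).trans ?_
    refine mul_le_mul_right ?_ D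
    refine lintegral_mono fun x => lintegral_mono fun y => ?_
    refine ENNReal.div_le_div (ENNReal.rpow_le_rpow ?_ hp0.le) le_rfl
    exact_mod_cast hlip k x y
  -- monotone convergence
  have hsup : (∫⁻ x, (‖u x‖₊ : ℝ≥0∞) ^ q) = ⨆ k : ℕ, ∫⁻ x, (‖v k x‖₊ : ℝ≥0∞) ^ q := by
    rw [← lintegral_iSup (fun k => ((hvm k).nnnorm.coe_nnreal_ennreal).pow_const q) ?_]
    · congr 1
      funext x
      apply le_antisymm
      · refine le_iSup_of_le ⌈(‖u x‖₊ : ℝ≥0)⌉₊ (le_of_eq ?_)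
        rw [habs, min_eq_left (Nat.le_ceil _)]
      · refine iSup_le fun k => ENNReal.rpow_le_rpow ?_ hq0.le
        rw [habs]
        exact_mod_cast min_le_left ‖u x‖₊ (k:ℝ≥0)
    · intro k l hkl x
      refine ENNReal.rpow_le_rpow ?_ hq0.le
      rw [habs, habs]
      exact_mod_cast min_le_min le_rfl (by exact_mod_cast Nat.cast_le.2 hkl)
  -- conclude
  rcases eq_or_ne (D * J) ⊤ with hT | hT
  · rw [hT]
    exact le_top
  · have hMk : ∀ k : ℕ, (∫⁻ x, (‖v k x‖₊ : ℝ≥0∞) ^ q) ≤ (D * J) ^ (1/θ) := by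
      intro k
      have h2 := ENNReal.rpow_le_rpow (hk1 k) (by positivity : (0:ℝ) ≤ 1/θ)
      rwa [← ENNReal.rpow_mul, show θ * (1/θ) = 1 by field_simp, ENNReal.rpow_one] at h2
    have hL : (∫⁻ x, (‖u x‖₊ : ℝ≥0∞) ^ q) ≤ (D * J) ^ (1/θ) := by
      rw [hsup]; exact iSup_le hMk
    have h3 := ENNReal.rpow_le_rpow hL hθ.le
    rwa [← ENNReal.rpow_mul, show (1/θ) * θ = 1 by field_simp, ENNReal.rpow_one] at h3

end FracSobMain
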